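/- Let L ≥ 0, p₁ ∈ (0,1], and let f : ℝ → (-∞,∞] be a non-decreasing convex function with f(0) = 0, f(p) ≥ ℓ_L(p) for every p ≥ p₁, and f(p) ≤ ℓ_L(p) for every p ≤ p₁; set q₁ := L/p₁ and ψ := co(f ∨ ℓ_L). Then the subdifferential of ψ at 0 equals [0, q₁], and the subdifferential of ψ at p₁ equals [q₁, D⁺f(p₁)] if D⁺f(p₁) < +∞ and equals [q₁, +∞) otherwise. -/

import Mathlib

open scoped Classical
noncomputable section

/-- Fenchel conjugate (Legendre transform) of an extended-real-valued function:
`fconj f q = sup_{p ∈ ℝ} (p*q - f p)`. -/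
def fconj (f : ℝ → EReal) (q : ℝ) : EReal := ⨆ p : ℝ, ((p * q : ℝ) : EReal) - f p

/-- Convexity for extended-real-valued functions on `ℝ`. -/
def ConvexE (f : ℝ → EReal) : Prop :=
  ∀ x y t : ℝ, 0 ≤ t → t ≤ 1 →
    f (t * x + (1 - t) * y) ≤ (t : EReal) * f x + ((1 - t : ℝ) : EReal) * f y

/-- The payoff function `ℓ_L`: `0` for `p ≤ 0`, `L` for `0 < p ≤ 1`, `+∞` for `p > 1`. -/
def ellL (L : ℝ) (p : ℝ) : EReal :=
  if p ≤ 0 then 0 else if p ≤ 1 then (L : EReal) else ⊤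

/-- Right derivative (as an extended real) of `f` at `p`, i.e. the infimum of the
right slopes `(f (p+h) - f p)/h` over `h > 0`. -/
def rightDE (f : ℝ → EReal) (p : ℝ) : EReal :=
  ⨅ h : {h : ℝ // 0 < h}, ((h.1⁻¹ : ℝ) : EReal) * (f (p + h.1) - f p)

/-- Left derivative (as an extended real) of `f` at `p`, i.e. the supremum of the
left slopes `(f p - f (p-h))/h` over `h > 0`. -/
def leftDE (f : ℝ → EReal) (p : ℝ) : EReal :=
  ⨆ h : {h : ℝ // 0 < h}, ((h.1⁻¹ : ℝ) : EReal) * (f p - f (p - h.1))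

/-- Closed convex envelope of `f`: the pointwise supremum of all lower semicontinuous
convex minorants of `f` (the largest closed convex function majorized by `f`). -/
def coE (f : ℝ → EReal) (p : ℝ) : EReal :=
  ⨆ g : {g : ℝ → EReal // ConvexE g ∧ LowerSemicontinuous g ∧ ∀ x, g x ≤ f x}, g.1 p

/-- Subdifferential of an extended-real-valued function at a point. -/
def subdiffE (f : ℝ → EReal) (p : ℝ) : Set ℝ :=
  {q : ℝ | ∀ r : ℝ, f p + ((q * (r - p) : ℝ) : EReal) ≤ f r}

section AuxLemmas

lemma aux_convexE_affine (c d : ℝ) : ConvexE (fun r => ((c*r + d : ℝ) : EReal)) := by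
  intro x y t ht ht1
  simp only
  rw [show c*(t * x + (1 - t) * y) + d = t*(c*x+d) + (1-t)*(c*y+d) by ring]
  push_cast
  rfl

lemma aux_lsc_affine (c d : ℝ) : LowerSemicontinuous (fun r : ℝ => ((c*r + d : ℝ) : EReal)) :=
  (continuous_coe_real_ereal.comp (by continuity)).lowerSemicontinuous

lemma aux_coE_le (F : ℝ → EReal) (p : ℝ) : coE F p ≤ F p :=
  iSup_le fun g => g.2.2.2 p

lemma aux_affine_le_coE (F : ℝ → EReal) (c d : ℝ)
    (h : ∀ x, ((c*x + d : ℝ) : EReal) ≤ F x) (p : ℝ) :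
    ((c*p + d : ℝ) : EReal) ≤ coE F p :=
  le_iSup_of_le ⟨fun r => ((c*r + d : ℝ) : EReal),
    aux_convexE_affine c d, aux_lsc_affine c d, h⟩ le_rfl

lemma aux_slope_iff (c L h : ℝ) (hh : 0 < h) (F : EReal) (hF : F ≠ ⊥) :
    ((c:EReal) ≤ ((h⁻¹:ℝ):EReal) * (F - (L:EReal))) ↔ (((L + c*h : ℝ):EReal) ≤ F) := by
  induction F with
  | bot => simp at hF
  | coe x =>
      rw [show (x:EReal) - (L:EReal) = ((x - L : ℝ):EReal) by norm_cast,
        show ((h⁻¹:ℝ):EReal) * ((x - L : ℝ):EReal) = ((h⁻¹ * (x-L) : ℝ):EReal) by norm_cast,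
        EReal.coe_le_coe_iff, EReal.coe_le_coe_iff]
      rw [le_inv_mul_iff₀ hh]
      constructor <;> intro <;> nlinarith
  | top =>
      simp only [le_top, iff_true]
      rw [EReal.top_sub_coe,
        show ((h⁻¹:ℝ):EReal) * ⊤ = ⊤ from EReal.coe_mul_top_of_pos (by positivity)]
      exact le_top

end AuxLemmas

theorem subdiff_convex_env_max_ellL
    (L : ℝ) (hL : 0 ≤ L) (p₁ : ℝ) (hp₁0 : 0 < p₁) (hp₁1 : p₁ ≤ 1)
    (f : ℝ → EReal) (hfbot : ∀ p, f p ≠ ⊥) (hmono : Monotone f) (hconv : ConvexE f)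
    (hf0 : f 0 = 0)
    (hge : ∀ p : ℝ, p₁ ≤ p → ellL L p ≤ f p)
    (hle : ∀ p : ℝ, p ≤ p₁ → f p ≤ ellL L p)
    (q₁ : ℝ) (hq₁ : q₁ = L / p₁) :
    subdiffE (coE (fun p => max (f p) (ellL L p))) 0 = Set.Icc 0 q₁ ∧
    (rightDE f p₁ < ⊤ →
      subdiffE (coE (fun p => max (f p) (ellL L p))) p₁
        = Set.Icc q₁ (rightDE f p₁).toReal) ∧
    (rightDE f p₁ = ⊤ →
      subdiffE (coE (fun p => max (f p) (ellL L p))) p₁ = Set.Ici q₁) := by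
  set G : ℝ → EReal := fun p => max (f p) (ellL L p) with hGdef
  set ψ : ℝ → EReal := coE G with hψdef
  have hq₁p₁ : q₁ * p₁ = L := by rw [hq₁]; field_simp
  have hq₁nn : 0 ≤ q₁ := hq₁ ▸ div_nonneg hL hp₁0.le
  -- values of ellL
  have hell0 : ∀ p : ℝ, p ≤ 0 → ellL L p = 0 := by
    intro p hp; simp [ellL, hp]
  have hellL : ∀ p : ℝ, 0 < p → p ≤ 1 → ellL L p = (L : EReal) := by
    intro p hp hp1; simp [ellL, not_le.2 hp, hp1]
  have hellT : ∀ p : ℝ, 1 < p → ellL L p = ⊤ := by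
    intro p hp; simp [ellL, not_le.2 (lt_trans zero_lt_one hp), not_le.2 hp]
  have hellnn : ∀ p : ℝ, (0 : EReal) ≤ ellL L p := by
    intro p; unfold ellL; split_ifs
    · exact le_refl _
    · exact_mod_cast hL
    · exact le_top
  have hGnn : ∀ p : ℝ, (0 : EReal) ≤ G p := fun p => le_trans (hellnn p) (le_max_right _ _)
  have hfp₁ : f p₁ = (L : EReal) := by
    refine le_antisymm ?_ ?_
    · have := hle p₁ le_rfl; rwa [hellL p₁ hp₁0 hp₁1] at this
    · have := hge p₁ le_rfl; rwa [hellL p₁ hp₁0 hp₁1] at this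
  -- fact 4 : f r ≥ q₁ r for r ≥ p₁
  have hfact4 : ∀ r : ℝ, p₁ ≤ r → ((q₁ * r : ℝ) : EReal) ≤ f r := by
    intro r hr
    have hr0 : 0 < r := lt_of_lt_of_le hp₁0 hr
    cases hFr : f r with
    | bot => exact absurd hFr (hfbot r)
    | top => exact le_top
    | coe x =>
        set t : ℝ := p₁ / r with ht
        have ht0 : 0 ≤ t := by positivity
        have ht1 : t ≤ 1 := div_le_one_of_le₀ hr hr0.le
        have hc := hconv r 0 t ht0 ht1
        rw [show t * r + (1 - t) * 0 = p₁ by rw [ht]; field_simp; ring, hf0, mul_zero, add_zero,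
          hfp₁, hFr, show (t:EReal) * (x:EReal) = ((t*x : ℝ):EReal) by norm_cast,
          EReal.coe_le_coe_iff] at hc
        rw [EReal.coe_le_coe_iff]
        rw [ht] at hc
        rw [hq₁]
        rw [div_mul_eq_mul_div, div_le_iff₀ hp₁0]
        rw [div_mul_eq_mul_div, le_div_iff₀ hr0] at hc
        nlinarith
  -- lines through origin below G
  have hlin : ∀ q : ℝ, 0 ≤ q → q ≤ q₁ → ∀ r : ℝ, ((q*r + 0 : ℝ) : EReal) ≤ G r := by
    intro q hq0 hqq r
    rcases le_or_gt r 0 with hr | hr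
    · calc ((q*r + 0 : ℝ) : EReal) ≤ ((0:ℝ) : EReal) := by
            rw [EReal.coe_le_coe_iff]; nlinarith
        _ ≤ G r := by exact_mod_cast hGnn r
    · rcases le_or_gt r p₁ with hrp | hrp
      · calc ((q*r + 0 : ℝ) : EReal) ≤ ((L:ℝ) : EReal) := by
              rw [EReal.coe_le_coe_iff]; nlinarith
          _ = ellL L r := (hellL r hr (le_trans hrp hp₁1)).symm
          _ ≤ G r := le_max_right _ _
      · calc ((q*r + 0 : ℝ) : EReal) ≤ ((q₁*r : ℝ) : EReal) := by
              rw [EReal.coe_le_coe_iff]; nlinarith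
          _ ≤ f r := hfact4 r hrp.le
          _ ≤ G r := le_max_left _ _
  -- ψ 0 = 0
  have hψ0 : ψ 0 = 0 := by
    refine le_antisymm ?_ ?_
    · refine le_trans (aux_coE_le G 0) ?_
      have : G 0 = 0 := by
        rw [hGdef]; simp only; rw [hf0, hell0 0 le_rfl, max_self]
      rw [this]
    · have h := aux_affine_le_coE G 0 0 (by simpa using hlin 0 le_rfl hq₁nn) 0
      simpa using h
  -- ψ p₁ = L
  have hψp₁ : ψ p₁ = (L : EReal) := by
    refine le_antisymm ?_ ?_
    · refine le_trans (aux_coE_le G p₁) ?_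
      rw [hGdef]; simp only; rw [hfp₁, hellL p₁ hp₁0 hp₁1, max_self]
    · have h := aux_affine_le_coE G q₁ 0 (hlin q₁ hq₁nn le_rfl) p₁
      rw [show q₁ * p₁ + 0 = L by rw [hq₁p₁]; ring] at h
      exact h
  -- right derivative nonneg
  have hDnn : (0 : EReal) ≤ rightDE f p₁ := by
    refine le_iInf fun h => ?_
    refine mul_nonneg ?_ ?_
    · exact_mod_cast (inv_nonneg.2 h.2.le)
    · have h1 : ((L:ℝ):EReal) ≤ f (p₁ + h.1) := hfp₁ ▸ hmono (by linarith [h.2])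
      have h2 : ((L:ℝ):EReal) - ((L:ℝ):EReal) ≤ f (p₁ + h.1) - ((L:ℝ):EReal) :=
        EReal.sub_le_sub h1 le_rfl
      rw [show ((L:ℝ):EReal) - ((L:ℝ):EReal) = ((L - L : ℝ):EReal) by norm_cast,
        sub_self, EReal.coe_zero] at h2
      rw [hfp₁]
      exact h2
  -- slope bounds characterization
  have hslope : ∀ q : ℝ, ((q:EReal) ≤ rightDE f p₁ ↔
      ∀ h : ℝ, 0 < h → ((L + q*h : ℝ) : EReal) ≤ f (p₁ + h)) := by
    intro q
    rw [rightDE]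
    constructor
    · intro hq h hh
      have := le_trans hq (iInf_le _ ⟨h, hh⟩)
      rw [hfp₁] at this
      exact (aux_slope_iff q L h hh (f (p₁ + h)) (hfbot _)).mp this
    · intro hq
      refine le_iInf fun h => ?_
      rw [hfp₁]
      exact (aux_slope_iff q L h.1 h.2 (f (p₁ + h.1)) (hfbot _)).mpr (hq h.1 h.2)
  -- main characterization at p₁
  have hmem : ∀ q : ℝ, q ∈ subdiffE ψ p₁ ↔ (q₁ ≤ q ∧ (q:EReal) ≤ rightDE f p₁) := by
    intro q
    constructor
    · intro hq
      constructor
      · have h0 := hq 0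
        rw [hψ0, hψp₁, show ((L:ℝ):EReal) + ((q * (0 - p₁) : ℝ):EReal)
          = ((L + q * (0 - p₁) : ℝ):EReal) by norm_cast] at h0
        have : L + q * (0 - p₁) ≤ 0 := by exact_mod_cast h0
        rw [hq₁, div_le_iff₀ hp₁0]; nlinarith
      · rw [hslope q]
        intro h hh
        have h1 := hq (p₁ + h)
        rw [hψp₁, show ((L:ℝ):EReal) + ((q * (p₁ + h - p₁) : ℝ):EReal)
          = ((L + q * h : ℝ):EReal) by rw [show q * (p₁ + h - p₁) = q * h by ring]; norm_cast]
          at h1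
        refine le_trans h1 (le_trans (aux_coE_le G (p₁ + h)) ?_)
        exact max_le le_rfl (hge (p₁ + h) (by linarith))
    · rintro ⟨hq1, hqD⟩
      have hq0 : 0 ≤ q := le_trans hq₁nn hq1
      have hsl := (hslope q).mp hqD
      have haff : ∀ x : ℝ, ((q * x + (L - q * p₁) : ℝ) : EReal) ≤ G x := by
        intro x
        rcases le_or_gt x 0 with hx | hx
        · calc ((q * x + (L - q * p₁) : ℝ) : EReal) ≤ ((0:ℝ) : EReal) := by
                rw [EReal.coe_le_coe_iff]; nlinarith
            _ ≤ G x := by exact_mod_cast hGnn x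
        · rcases le_or_gt x p₁ with hxp | hxp
          · calc ((q * x + (L - q * p₁) : ℝ) : EReal) ≤ ((L:ℝ) : EReal) := by
                  rw [EReal.coe_le_coe_iff]; nlinarith
              _ = ellL L x := (hellL x hx (le_trans hxp hp₁1)).symm
              _ ≤ G x := le_max_right _ _
          · have h1 := hsl (x - p₁) (by linarith)
            rw [show p₁ + (x - p₁) = x by ring] at h1
            calc ((q * x + (L - q * p₁) : ℝ) : EReal)
                = ((L + q * (x - p₁) : ℝ) : EReal) := by rw [show q * x + (L - q * p₁)
                    = L + q * (x - p₁) by ring]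
              _ ≤ f x := h1
              _ ≤ G x := le_max_left _ _
      intro r
      have h2 := aux_affine_le_coE G q (L - q * p₁) haff r
      rw [hψp₁, show ((L:ℝ):EReal) + ((q * (r - p₁) : ℝ):EReal)
        = ((q * r + (L - q * p₁) : ℝ):EReal) by
          rw [show (q * r + (L - q * p₁) : ℝ) = L + q * (r - p₁) by ring]; norm_cast]
      exact h2
  refine ⟨?_, ?_, ?_⟩
  · ext q
    simp only [Set.mem_Icc]
    constructor
    · intro hq
      constructor
      · have h1 := hq (-1)
        have hG : G (-1) ≤ 0 := by
          refine max_le ?_ (le_of_eq (hell0 (-1) (by norm_num)))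
          exact le_trans (hle (-1) (by linarith)) (le_of_eq (hell0 (-1) (by norm_num)))
        have h2 : ψ (-1) ≤ 0 := le_trans (aux_coE_le G (-1)) hG
        rw [hψ0, zero_add] at h1
        have : q * (-1 - 0) ≤ 0 := by exact_mod_cast le_trans h1 h2
        nlinarith
      · have h1 := hq p₁
        have h2 : ψ p₁ ≤ (L : EReal) := le_of_eq hψp₁
        rw [hψ0, zero_add] at h1
        have : q * (p₁ - 0) ≤ L := by exact_mod_cast le_trans h1 h2
        rw [hq₁, le_div_iff₀ hp₁0]; nlinarith
    · rintro ⟨hq0, hqq⟩ r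
      rw [hψ0, zero_add, show (q * (r - 0) : ℝ) = q * r + 0 by ring]
      exact aux_affine_le_coE G q 0 (hlin q hq0 hqq) r
  · intro hlt
    have hne_top : rightDE f p₁ ≠ ⊤ := hlt.ne
    have hne_bot : rightDE f p₁ ≠ ⊥ := fun h => by rw [h] at hDnn; simp at hDnn
    ext q
    rw [Set.mem_Icc, hmem q]
    have hco : (((rightDE f p₁).toReal : ℝ) : EReal) = rightDE f p₁ :=
      EReal.coe_toReal hne_top hne_bot
    have hiff : (q:EReal) ≤ rightDE f p₁ ↔ q ≤ (rightDE f p₁).toReal := by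
      rw [← EReal.coe_le_coe_iff (x := q) (y := (rightDE f p₁).toReal), hco]
    rw [hiff]
  · intro htop
    ext q
    rw [Set.mem_Ici, hmem q, htop]
    exact and_iff_left le_top
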